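/- arXiv:2203.02674 — 4 statements merged into one kernel-verified Lean document; each statement's English description precedes it below -/
import Mathlib

section
/- Let n be a positive integer and let Z₃, Ω₁, Ω₂, Ω₃ be n×n complex matrices such that Z₃ is invertible and Z₃ = Ω₃ᴴ Ω₃. Suppose Z₂ is an n×n complex matrix satisfying Z₂ = (Z₃⁻¹ Ω₂ᴴ Z₃) Ω₂, suppose the product Z₃ Z₂ is invertible, and suppose Z₁ is an n×n complex matrix satisfying Z₁ = ((Z₃ Z₂)⁻¹ Ω₁ᴴ (Z₃ Z₂)) Ω₁. Then the physical metric Θ₃ := Z₃ Z₂ Z₁ satisfies Θ₃ = (Ω₃ Ω₂ Ω₁)ᴴ (Ω₃ Ω₂ Ω₁). -/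
open Matrix

/-- K=4 composition law for generalized Dyson maps (Lemma 2). -/
theorem dyson_composition_K4 (n : ℕ) (hn : 0 < n)
    (Z₁ Z₂ Z₃ Ω₁ Ω₂ Ω₃ : Matrix (Fin n) (Fin n) ℂ)
    (hZ₃inv : IsUnit Z₃)
    (hZ₃ : Z₃ = Ω₃ᴴ * Ω₃)
    (hZ₂ : Z₂ = (Z₃⁻¹ * Ω₂ᴴ * Z₃) * Ω₂)
    (hZ₃Z₂inv : IsUnit (Z₃ * Z₂))
    (hZ₁ : Z₁ = ((Z₃ * Z₂)⁻¹ * Ω₁ᴴ * (Z₃ * Z₂)) * Ω₁) :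
    Z₃ * Z₂ * Z₁ = (Ω₃ * Ω₂ * Ω₁)ᴴ * (Ω₃ * Ω₂ * Ω₁) := by
  have h3 : Z₃ * Z₃⁻¹ = 1 := mul_nonsing_inv _ ((isUnit_iff_isUnit_det _).mp hZ₃inv)
  have h32 : (Z₃ * Z₂) * (Z₃ * Z₂)⁻¹ = 1 :=
    mul_nonsing_inv _ ((isUnit_iff_isUnit_det _).mp hZ₃Z₂inv)
  have key : Z₃ * Z₂ = Ω₂ᴴ * Z₃ * Ω₂ := by
    rw [hZ₂, ← mul_assoc, ← mul_assoc, ← mul_assoc, h3, one_mul]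
  rw [hZ₁]
  simp only [← mul_assoc]
  rw [h32, one_mul, mul_assoc Ω₁ᴴ, key, hZ₃]
  simp [Matrix.conjTranspose_mul, mul_assoc]
end

section
/- Let K ≥ 2 and let Z₁, …, Z_{K−1} and Ω₁, …, Ω_{K−1} be n×n complex matrices. For each j with 1 ≤ j ≤ K−1 define Θ_j := Z_{K−1} Z_{K−2} ⋯ Z_{j+1} (the product taken in decreasing order of indices, with Θ_{K−1} := the identity matrix). Assume each Θ_j is invertible and that each Z_j admits the factorization Z_j = (Θ_j⁻¹ Ω_jᴴ Θ_j) Ω_j. Then the physical metric Θ := Z_{K−1} Z_{K−2} ⋯ Z₂ Z₁ satisfies Θ = (Ω_{K−1} ⋯ Ω₂ Ω₁)ᴴ (Ω_{K−1} ⋯ Ω₂ Ω₁). -/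
open Matrix

/-- The descending product `Z_{K-1} * Z_{K-2} * ⋯ * Z_{k+1}`
(the identity matrix when `k ≥ K-1`). -/
noncomputable def descProd {n : ℕ} (Z : ℕ → Matrix (Fin n) (Fin n) ℂ) (K k : ℕ) :
    Matrix (Fin n) (Fin n) ℂ :=
  ((List.range (K - 1 - k)).map (fun i => Z (K - 1 - i))).prod

lemma descProd_step {n : ℕ} (W : ℕ → Matrix (Fin n) (Fin n) ℂ) (K k : ℕ)
    (h : k + 1 ≤ K - 1) : descProd W K k = descProd W K (k + 1) * W (k + 1) := by
  unfold descProd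
  have h1 : K - 1 - k = (K - 1 - (k + 1)) + 1 := by omega
  have h2 : K - 1 - (K - 1 - (k + 1)) = k + 1 := by omega
  rw [h1, List.range_succ, List.map_append, List.prod_append]
  simp [h2]

/-- General-K composition law for generalized Dyson maps (Theorem 1). -/
theorem dyson_composition_generalK (n K : ℕ) (hK : 2 ≤ K)
    (Z Ω : ℕ → Matrix (Fin n) (Fin n) ℂ)
    (hinv : ∀ j, 1 ≤ j → j ≤ K - 1 → IsUnit (descProd Z K j))
    (hfac : ∀ j, 1 ≤ j → j ≤ K - 1 →
      Z j = ((descProd Z K j)⁻¹ * (Ω j)ᴴ * (descProd Z K j)) * Ω j) :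
    descProd Z K 0 = (descProd Ω K 0)ᴴ * (descProd Ω K 0) := by
  have key : ∀ d, d ≤ K - 1 →
      descProd Z K (K - 1 - d) = (descProd Ω K (K - 1 - d))ᴴ * (descProd Ω K (K - 1 - d)) := by
    intro d
    induction d with
    | zero =>
      intro _
      simp [descProd]
    | succ d ih =>
      intro hd
      have hk : (K - 1 - (d + 1)) + 1 = K - 1 - d := by omega
      set k := K - 1 - (d + 1) with hkdef
      have hk1 : k + 1 ≤ K - 1 := by omega
      have hZ : descProd Z K k = descProd Z K (k + 1) * Z (k + 1) := descProd_step Z K k hk1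
      have hΩ : descProd Ω K k = descProd Ω K (k + 1) * Ω (k + 1) := descProd_step Ω K k hk1
      have hTheta : descProd Z K (k + 1) = (descProd Ω K (k + 1))ᴴ * descProd Ω K (k + 1) := by
        rw [hk]; exact ih (by omega)
      have hu : IsUnit (descProd Z K (k + 1)) := hinv (k + 1) (by omega) hk1
      have hmulinv : descProd Z K (k + 1) * (descProd Z K (k + 1))⁻¹ = 1 :=
        Matrix.mul_nonsing_inv _ ((Matrix.isUnit_iff_isUnit_det _).mp hu)
      rw [hZ, hΩ, hfac (k + 1) (by omega) hk1]
      calc descProd Z K (k + 1) * ((descProd Z K (k + 1))⁻¹ * (Ω (k + 1))ᴴ * descProd Z K (k + 1) * Ω (k + 1))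
          = (descProd Z K (k + 1) * (descProd Z K (k + 1))⁻¹) * ((Ω (k + 1))ᴴ * descProd Z K (k + 1) * Ω (k + 1)) := by
            simp only [Matrix.mul_assoc]
        _ = (Ω (k + 1))ᴴ * descProd Z K (k + 1) * Ω (k + 1) := by rw [hmulinv, Matrix.one_mul]
        _ = (descProd Ω K (k + 1) * Ω (k + 1))ᴴ * (descProd Ω K (k + 1) * Ω (k + 1)) := by
            rw [hTheta, Matrix.conjTranspose_mul]
            simp only [Matrix.mul_assoc]
  have h0 : K - 1 - (K - 1) = 0 := by omega
  have := key (K - 1) le_rfl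
  rwa [h0] at this
end

section
/- Let K ≥ 2 and let Ω₁, …, Ω_{K−1} be invertible n×n complex matrices. Then there exist n×n complex matrices Z₁, …, Z_{K−1} such that, with Θ_j := Z_{K−1} ⋯ Z_{j+1} (and Θ_{K−1} the identity), every Θ_j is invertible, every Z_j satisfies Z_j = (Θ_j⁻¹ Ω_jᴴ Θ_j) Ω_j, and Z_{K−1} ⋯ Z₁ = (Ω_{K−1} ⋯ Ω₁)ᴴ (Ω_{K−1} ⋯ Ω₁). -/
open Matrix

lemma descProd_succ {n : ℕ} (M : ℕ → Matrix (Fin n) (Fin n) ℂ) (K k : ℕ)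
    (hk : k + 1 ≤ K - 1) :
    descProd M K k = descProd M K (k + 1) * M (k + 1) := by
  have h1 : K - 1 - k = (K - 1 - (k + 1)) + 1 := by omega
  have h2 : K - 1 - (K - 1 - (k + 1)) = k + 1 := by omega
  rw [descProd, h1, List.range_succ, List.map_append, List.prod_append]
  simp [descProd, h2]

lemma descProd_top {n : ℕ} (M : ℕ → Matrix (Fin n) (Fin n) ℂ) (K k : ℕ)
    (hk : K - 1 ≤ k) : descProd M K k = 1 := by
  have : K - 1 - k = 0 := by omega
  simp [descProd, this]

/-- Existence direction of the equivalence of Theorem 1: any family of invertible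
Dyson maps Ω₁, …, Ω_{K-1} arises from factorized operators Z₁, …, Z_{K-1}. -/
theorem dyson_composition_existence (n K : ℕ) (hK : 2 ≤ K)
    (Ω : ℕ → Matrix (Fin n) (Fin n) ℂ)
    (hΩ : ∀ j, 1 ≤ j → j ≤ K - 1 → IsUnit (Ω j)) :
    ∃ Z : ℕ → Matrix (Fin n) (Fin n) ℂ,
      (∀ j, 1 ≤ j → j ≤ K - 1 →
        IsUnit (descProd Z K j) ∧
        Z j = ((descProd Z K j)⁻¹ * (Ω j)ᴴ * (descProd Z K j)) * Ω j) ∧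
      descProd Z K 0 = (descProd Ω K 0)ᴴ * (descProd Ω K 0) := by
  set W : ℕ → Matrix (Fin n) (Fin n) ℂ := fun k => descProd Ω K k with hWdef
  have hWunit : ∀ k, IsUnit (W k) := by
    intro k
    apply List.prod_isUnit
    intro m hm
    simp only [List.mem_map, List.mem_range] at hm
    obtain ⟨i, hi, rfl⟩ := hm
    exact hΩ _ (by omega) (by omega)
  set Z : ℕ → Matrix (Fin n) (Fin n) ℂ :=
    fun j => (W j)⁻¹ * ((W j)ᴴ)⁻¹ * (W (j - 1))ᴴ * W (j - 1) with hZdef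
  have key : ∀ d, d ≤ K - 1 →
      descProd Z K (K - 1 - d) = (W (K - 1 - d))ᴴ * W (K - 1 - d) := by
    intro d
    induction d with
    | zero =>
      intro _
      simp only [Nat.sub_zero, hWdef]
      rw [descProd_top Z K (K - 1) le_rfl, descProd_top Ω K (K - 1) le_rfl]
      simp
    | succ d ih =>
      intro hd
      have hk : (K - 1 - (d + 1)) + 1 = K - 1 - d := by omega
      have h1 : K - 1 - (d + 1) + 1 ≤ K - 1 := by omega
      rw [descProd_succ Z K _ h1, hk, ih (by omega)]
      have hk' : K - 1 - d - 1 = K - 1 - (d + 1) := by omega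
      set A := W (K - 1 - d) with hA
      set X := W (K - 1 - (d + 1)) with hX
      have hZ' : Z (K - 1 - d) = A⁻¹ * (Aᴴ)⁻¹ * Xᴴ * X := by
        rw [hZdef]; simp only [hk']; rfl
      rw [hZ']
      have hAu : IsUnit A.det := (Matrix.isUnit_iff_isUnit_det _).mp (hWunit _)
      have hAHu : IsUnit (Aᴴ).det :=
        (Matrix.isUnit_iff_isUnit_det _).mp ((Matrix.isUnit_conjTranspose _).mpr (hWunit _))
      have e1 : A * A⁻¹ = 1 := Matrix.mul_nonsing_inv _ hAu
      have e2 : Aᴴ * (Aᴴ)⁻¹ = 1 := Matrix.mul_nonsing_inv _ hAHu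
      have : Aᴴ * A * (A⁻¹ * (Aᴴ)⁻¹ * Xᴴ * X)
          = Aᴴ * (A * A⁻¹) * (Aᴴ)⁻¹ * (Xᴴ * X) := by noncomm_ring
      rw [this, e1, mul_one, e2, one_mul]
  have hΘ : ∀ j ≤ K - 1, descProd Z K j = (W j)ᴴ * W j := by
    intro j hj
    have h := key (K - 1 - j) (by omega)
    rwa [show K - 1 - (K - 1 - j) = j by omega] at h
  refine ⟨Z, ?_, ?_⟩
  · intro j hj1 hj2
    rw [hΘ j hj2]
    constructor
    · exact ((Matrix.isUnit_conjTranspose _).mpr (hWunit j)).mul (hWunit j)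
    · have hWj : W (j - 1) = W j * Ω j := by
        have := descProd_succ Ω K (j - 1) (by omega)
        rw [show j - 1 + 1 = j by omega] at this
        rw [hWdef]; exact this
      rw [hZdef]
      simp only [hWj, Matrix.mul_inv_rev, conjTranspose_mul, mul_assoc]
  · rw [hΘ 0 (by omega), hWdef]
end

section
/- Let K ≥ 2 and let Z₁, …, Z_{K−1} be n×n complex matrices. For 0 ≤ k ≤ K−1 define Θ_k := Z_{K−1} Z_{K−2} ⋯ Z_{k+1} (product in decreasing order of indices, with Θ_{K−1} the identity), and assume that for each k with 1 ≤ k ≤ K−1 the pseudo-Hermiticity relation Z_kᴴ Θ_k = Θ_k Z_k holds. Then for every m with 1 ≤ m ≤ K−1 the product P_m := Z_m Z_{m−1} ⋯ Z₁ is quasi-Hermitian with respect to the physical metric Θ := Θ₀ = Z_{K−1} ⋯ Z₁, i.e. (Z_m ⋯ Z₁)ᴴ (Z_{K−1} ⋯ Z₁) = (Z_{K−1} ⋯ Z₁)(Z_m ⋯ Z₁). -/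
open Matrix

lemma descProd_triv {n : ℕ} (Z : ℕ → Matrix (Fin n) (Fin n) ℂ) (K k : ℕ)
    (h : K - 1 ≤ k) : descProd Z K k = 1 := by
  unfold descProd
  have : K - 1 - k = 0 := by omega
  rw [this]
  simp

lemma descProd_peel {n : ℕ} (Z : ℕ → Matrix (Fin n) (Fin n) ℂ) (K k : ℕ)
    (h : k + 1 ≤ K - 1) :
    descProd Z K k = descProd Z K (k + 1) * Z (k + 1) := by
  unfold descProd
  have h1 : K - 1 - k = (K - 1 - (k + 1)) + 1 := by omega
  rw [h1, List.range_succ, List.map_append, List.prod_append]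
  have h2 : K - 1 - (K - 1 - (k + 1)) = k + 1 := by omega
  simp only [List.map_cons, List.map_nil, List.prod_cons, List.prod_nil, mul_one, h2]

lemma descProd_single {n : ℕ} (Z : ℕ → Matrix (Fin n) (Fin n) ℂ) (k : ℕ) :
    descProd Z (k + 2) k = Z (k + 1) := by
  unfold descProd
  have : k + 2 - 1 - k = 1 := by omega
  rw [this]
  rw [show List.range 1 = [0] from rfl]
  simp

lemma descProd_split {n : ℕ} (Z : ℕ → Matrix (Fin n) (Fin n) ℂ) (K : ℕ) :
    ∀ d m k, m - k = d → k ≤ m → m ≤ K - 1 →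
      descProd Z K k = descProd Z K m * descProd Z (m + 1) k := by
  intro d
  induction d with
  | zero =>
    intro m k h1 h2 h3
    have hkm : k = m := by omega
    subst hkm
    rw [descProd_triv Z (k + 1) k (by omega), mul_one]
  | succ d ih =>
    intro m k h1 h2 h3
    have hk : k + 1 ≤ K - 1 := by omega
    have hk2 : k + 1 ≤ (m + 1) - 1 := by omega
    rw [descProd_peel Z K k hk, descProd_peel Z (m + 1) k hk2,
        ih m (k + 1) (by omega) (by omega) h3, mul_assoc]

lemma descProd_key {n K : ℕ} (Z : ℕ → Matrix (Fin n) (Fin n) ℂ)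
    (hpseudo : ∀ k, 1 ≤ k → k ≤ K - 1 →
      (Z k)ᴴ * descProd Z K k = descProd Z K k * Z k) :
    ∀ m, 1 ≤ m → m ≤ K - 1 →
      (descProd Z (m + 1) 0)ᴴ * descProd Z K m = descProd Z K m * descProd Z (m + 1) 0 := by
  intro m
  induction m with
  | zero => omega
  | succ m ih =>
    intro _ hm
    rcases Nat.eq_zero_or_pos m with hm0 | hm1
    · subst hm0
      have h1 : descProd Z 2 0 = Z 1 := descProd_single Z 0
      rw [h1]
      exact hpseudo 1 le_rfl hm
    · -- m ≥ 1, m + 1 ≤ K - 1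
      have hsplit : descProd Z (m + 2) 0 = Z (m + 1) * descProd Z (m + 1) 0 := by
        rw [descProd_split Z (m + 2) m m 0 (by omega) (by omega) (by omega),
            descProd_single Z m]
      have hpeel : descProd Z K m = descProd Z K (m + 1) * Z (m + 1) :=
        descProd_peel Z K m hm
      calc (descProd Z (m + 1 + 1) 0)ᴴ * descProd Z K (m + 1)
          = (descProd Z (m + 1) 0)ᴴ * ((Z (m + 1))ᴴ * descProd Z K (m + 1)) := by
            rw [hsplit, conjTranspose_mul, mul_assoc]
        _ = (descProd Z (m + 1) 0)ᴴ * (descProd Z K (m + 1) * Z (m + 1)) := by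
            rw [hpseudo (m + 1) (by omega) hm]
        _ = (descProd Z (m + 1) 0)ᴴ * descProd Z K m := by rw [hpeel]
        _ = descProd Z K m * descProd Z (m + 1) 0 := ih hm1 (by omega)
        _ = descProd Z K (m + 1) * (Z (m + 1) * descProd Z (m + 1) 0) := by
            rw [hpeel, mul_assoc]
        _ = descProd Z K (m + 1) * descProd Z (m + 1 + 1) 0 := by rw [hsplit]

/-- General-K observability: under the hierarchy of pseudo-Hermiticity relations
of Table 2, each left-factor product Z_m ⋯ Z₁ of the metric is quasi-Hermitian with
respect to the physical metric Θ = Z_{K-1} ⋯ Z₁. -/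
theorem leftFactor_quasiHermitian_generalK (n K : ℕ) (hK : 2 ≤ K)
    (Z : ℕ → Matrix (Fin n) (Fin n) ℂ)
    (hpseudo : ∀ k, 1 ≤ k → k ≤ K - 1 →
      (Z k)ᴴ * descProd Z K k = descProd Z K k * Z k) :
    ∀ m, 1 ≤ m → m ≤ K - 1 →
      (descProd Z (m + 1) 0)ᴴ * descProd Z K 0 =
        descProd Z K 0 * descProd Z (m + 1) 0 := by
  intro m hm1 hm2
  have hsplit : descProd Z K 0 = descProd Z K m * descProd Z (m + 1) 0 :=
    descProd_split Z K m m 0 (by omega) (by omega) hm2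
  have hkey := descProd_key Z hpseudo m hm1 hm2
  rw [hsplit, ← mul_assoc, hkey, mul_assoc]
end
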